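/- Let 0 < ε, b > 0, set s = πb/√ε, let x₁ : [0,s] → ℝ be continuously differentiable with x₁(0) = 0, x₁' ≥ 0 and x₁(s) ≥ b, and let L₀ : [0,s] → ℝ be continuous, strictly positive, with L₀(q) ≤ b^ε for all q. Then sup_{q ∈ [0,s]} x₁'(q)·x₁(q)^ε / L₀(q) ≥ √ε / ((1+ε)π). (Thus near the reconnection the tangent direction ratio |T₁|/‖T‖ is bounded below by √ε/((1+ε)π), independent of the curve.) -/

import Mathlib

/-- near the reconnection (at `r_c = 0`, over half a Crow wavelength
`s = πb/√ε`) the tangent ratio `|T₁|/‖T‖ = x₁'·x₁^ε/L₀` has supremum at least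
`√ε/((1+ε)π)`. -/
theorem stmt11 (ε b : ℝ) (hε : 0 < ε) (hb : 0 < b)
    (s : ℝ) (hs : s = Real.pi * b / Real.sqrt ε)
    (x₁ L₀ : ℝ → ℝ)
    (hx : ContDiffOn ℝ 1 x₁ (Set.Icc 0 s))
    (hx0 : x₁ 0 = 0)
    (hx' : ∀ q ∈ Set.Icc 0 s, 0 ≤ derivWithin x₁ (Set.Icc 0 s) q)
    (hxs : b ≤ x₁ s)
    (hL : ContinuousOn L₀ (Set.Icc 0 s))
    (hLpos : ∀ q ∈ Set.Icc 0 s, 0 < L₀ q)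
    (hLb : ∀ q ∈ Set.Icc 0 s, L₀ q ≤ b ^ ε) :
    Real.sqrt ε / ((1 + ε) * Real.pi)
      ≤ sSup ((fun q => derivWithin x₁ (Set.Icc 0 s) q * x₁ q ^ ε / L₀ q) '' Set.Icc 0 s) := by
  have hse : 0 < Real.sqrt ε := Real.sqrt_pos.2 hε
  have hspos : 0 < s := by rw [hs]; positivity
  have hmem0 : (0:ℝ) ∈ Set.Icc 0 s := ⟨le_rfl, hspos.le⟩
  have hmems : s ∈ Set.Icc 0 s := ⟨hspos.le, le_rfl⟩
  set I := Set.Icc (0:ℝ) s with hI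
  set f : ℝ → ℝ := fun q => derivWithin x₁ I q * x₁ q ^ ε / L₀ q with hf
  set S := sSup (f '' I) with hSdef
  have hUD : UniqueDiffOn ℝ I := uniqueDiffOn_Icc hspos
  have hxc : ContinuousOn x₁ I := hx.continuousOn
  have hxd : DifferentiableOn ℝ x₁ I := hx.differentiableOn one_ne_zero
  have hmono : MonotoneOn x₁ I := by
    apply monotoneOn_of_hasDerivWithinAt_nonneg (convex_Icc 0 s) hxc
      (f' := derivWithin x₁ I)
    · intro q hq
      exact ((hxd q (interior_subset hq)).hasDerivWithinAt).mono interior_subset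
    · intro q hq
      exact hx' q (interior_subset hq)
  have hxnn : ∀ q ∈ I, 0 ≤ x₁ q := by
    intro q hq
    have := hmono hmem0 hq hq.1
    rwa [hx0] at this
  -- f is continuous on I
  have hfc : ContinuousOn f I := by
    apply ContinuousOn.div
    · exact (hx.continuousOn_derivWithin hUD le_rfl).mul
        (hxc.rpow_const (fun q hq => Or.inr hε.le))
    · exact hL
    · intro q hq; exact (hLpos q hq).ne'
  -- every value of f is ≤ S
  have hbdd : BddAbove (f '' I) :=
    ((isCompact_Icc.image_of_continuousOn hfc).isBounded).bddAbove
  have hfle : ∀ q ∈ I, f q ≤ S := fun q hq => le_csSup hbdd ⟨q, hq, rfl⟩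
  have hSnn : 0 ≤ S := by
    refine le_trans ?_ (hfle 0 hmem0)
    have h1 := hx' 0 hmem0
    have h2 : (0:ℝ) ≤ x₁ 0 ^ ε := Real.rpow_nonneg (by rw [hx0]) ε
    have h3 := (hLpos 0 hmem0).le
    positivity
  -- key pointwise bound
  have hkey : ∀ q ∈ I, derivWithin x₁ I q * x₁ q ^ ε ≤ S * b ^ ε := by
    intro q hq
    have h1 : f q ≤ S := hfle q hq
    have h2 : derivWithin x₁ I q * x₁ q ^ ε ≤ S * L₀ q := by
      have := (div_le_iff₀ (hLpos q hq)).1 h1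
      linarith [this]
    refine h2.trans ?_
    exact mul_le_mul_of_nonneg_left (hLb q hq) hSnn
  -- G q = S*b^ε*(1+ε)*q - x₁ q ^ (1+ε) is monotone on I
  have hder : ∀ q ∈ I, HasDerivWithinAt (fun q => x₁ q ^ (1+ε))
      ((1+ε) * x₁ q ^ ε * derivWithin x₁ I q) I q := by
    intro q hq
    have h1 : HasDerivAt (fun y : ℝ => y ^ (1+ε)) ((1+ε) * x₁ q ^ (1+ε-1)) (x₁ q) :=
      Real.hasDerivAt_rpow_const (Or.inr (by linarith))
    have h2 : HasDerivWithinAt x₁ (derivWithin x₁ I q) I q :=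
      (hxd q hq).hasDerivWithinAt
    have := h1.comp_hasDerivWithinAt q h2
    simpa [add_sub_cancel_left, Function.comp_def] using this
  have hGmono : MonotoneOn (fun q => S * b ^ ε * (1+ε) * q - x₁ q ^ (1+ε)) I := by
    apply monotoneOn_of_hasDerivWithinAt_nonneg (convex_Icc 0 s)
      (f' := fun q => S * b ^ ε * (1+ε) - (1+ε) * x₁ q ^ ε * derivWithin x₁ I q)
    · exact (continuousOn_const.mul continuousOn_id).sub
        (hxc.rpow_const (fun q hq => Or.inr (by linarith)))
    · intro q hq
      have := ((hasDerivWithinAt_id q I).const_mul (S * b ^ ε * (1+ε))).sub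
        (hder q (interior_subset hq))
      simpa [mul_comm, Pi.sub_def] using this.mono (Set.Ioo_subset_Icc_self : Set.Ioo (0:ℝ) s ⊆ I)
    · intro q hq
      have hq' := interior_subset hq
      have := hkey q hq'
      have h1 : (1+ε) * (derivWithin x₁ I q * x₁ q ^ ε) ≤ (1+ε) * (S * b ^ ε) :=
        mul_le_mul_of_nonneg_left this (by linarith)
      nlinarith [h1]
  have hG := hGmono hmem0 hmems hspos.le
  have hG0 : x₁ 0 ^ (1+ε) = 0 := by
    rw [hx0, Real.zero_rpow (by positivity)]
  have hGs : x₁ s ^ (1+ε) ≤ S * b ^ ε * (1+ε) * s := by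
    simp only [hG0, mul_zero, sub_zero] at hG
    linarith [hG]
  have hbx : b ^ (1+ε) ≤ x₁ s ^ (1+ε) :=
    Real.rpow_le_rpow hb.le hxs (by positivity)
  have hbsplit : b ^ (1+ε) = b * b ^ ε := by
    rw [Real.rpow_add hb, Real.rpow_one]
  have hbe : (0:ℝ) < b ^ ε := Real.rpow_pos_of_pos hb ε
  -- main inequality
  have hmain : b * b ^ ε ≤ S * b ^ ε * (1+ε) * (Real.pi * b / Real.sqrt ε) := by
    rw [← hbsplit, ← hs]
    exact hbx.trans hGs
  have h1 : 1 ≤ S * (1+ε) * Real.pi / Real.sqrt ε := by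
    have hbc : 0 < b * b ^ ε := by positivity
    have heq : S * b ^ ε * (1+ε) * (Real.pi * b / Real.sqrt ε)
        = (S * (1+ε) * Real.pi / Real.sqrt ε) * (b * b ^ ε) := by ring
    rw [heq] at hmain
    exact (le_mul_iff_one_le_left hbc).1 hmain
  have h2 : Real.sqrt ε ≤ S * ((1+ε) * Real.pi) := by
    have := (one_le_div hse).1 h1
    linarith [this]
  rw [div_le_iff₀ (by positivity : (0:ℝ) < (1+ε) * Real.pi)]
  exact h2
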